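/- Let n ≥ 1, k ≥ 2 and j ≥ 1 be integers with n + j ≤ kn, and let f be a path in 𝒫_{n,k,j}. Let s be the cardinality of the orbit of f under the operation 'rotate left k units' (cyclic left-rotation by k steps). Then s divides n, and n/s divides j. -/

import Mathlib

/-- A path in 𝒫_{n,k,j}: a function `f : Fin (k*n) → ℤ` with all values in {1, −1}
and exactly `n+j` values equal to 1. -/
def IsPathPJ (n k j : ℕ) (f : Fin (k * n) → ℤ) : Prop :=
  (∀ t, f t = 1 ∨ f t = -1) ∧
    (Finset.univ.filter (fun t : Fin (k * n) => f t = 1)).card = n + j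

/-- Cyclic left-rotation of `f : Fin N → ℤ` by `r` steps: `t ↦ f((t + r) mod N)`. -/
def rotL {N : ℕ} (r : ℕ) (f : Fin N → ℤ) : Fin N → ℤ :=
  fun t => f ⟨((t : ℕ) + r) % N, Nat.mod_lt _ t.pos⟩

lemma orbit_aux {α : Type*} (F : α → α) (x : α) (n : ℕ) (hn : 0 < n) (h : F^[n] x = x) :
    ∃ d : ℕ, 0 < d ∧ d ∣ n ∧ F^[d] x = x ∧
      Nat.card {y : α // ∃ m : ℕ, F^[m] x = y} = d := by
  classical
  have hex : ∃ m, 0 < m ∧ F^[m] x = x := ⟨n, hn, h⟩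
  set d := Nat.find hex with hd
  obtain ⟨hdpos, hdfix⟩ := Nat.find_spec hex
  have hmul : ∀ q, F^[d * q] x = x := by
    intro q
    induction q with
    | zero => simp
    | succ q ih => rw [Nat.mul_succ, Function.iterate_add_apply, hdfix, ih]
  have hdvd : ∀ m, F^[m] x = x → d ∣ m := by
    intro m hm
    rcases Nat.eq_zero_or_pos (m % d) with h0 | hpos
    · exact Nat.dvd_of_mod_eq_zero h0
    · exfalso
      have hmd : F^[m % d] x = x := by
        conv at hm => rw [← Nat.mod_add_div m d]
        rwa [Function.iterate_add_apply, hmul] at hm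
      exact Nat.find_min hex (Nat.mod_lt _ hdpos) ⟨hpos, hmd⟩
  have hdn : d ∣ n := hdvd n h
  have hrep : ∀ m, ∃ r, r < d ∧ F^[m] x = F^[r] x := by
    intro m
    refine ⟨m % d, Nat.mod_lt _ hdpos, ?_⟩
    conv_lhs => rw [← Nat.mod_add_div m d]
    rw [Function.iterate_add_apply, hmul]
  have hinj : ∀ i j, i < d → j < d → i ≤ j → F^[i] x = F^[j] x → i = j := by
    intro i j hi hj hij heq
    have hjn : j ≤ n := le_trans (le_of_lt hj) (Nat.le_of_dvd hn hdn)
    have key : F^[n - j + i] x = x := by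
      have h1 : F^[n - j] (F^[i] x) = F^[n - j] (F^[j] x) := by rw [heq]
      rw [← Function.iterate_add_apply, ← Function.iterate_add_apply] at h1
      have h2 : n - j + j = n := Nat.sub_add_cancel hjn
      rw [h2, h] at h1
      exact h1
    have h2 : d ∣ (j - i) := by
      have h3 := Nat.dvd_sub hdn (hdvd _ key)
      have h4 : n - (n - j + i) = j - i := by omega
      rwa [h4] at h3
    have h5 := Nat.eq_zero_of_dvd_of_lt h2 (by omega)
    omega
  refine ⟨d, hdpos, hdn, hdfix, ?_⟩
  set S : Set α := {y : α | ∃ m : ℕ, F^[m] x = y} with hS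
  set T : Finset α := (Finset.range d).image (fun r => F^[r] x) with hT
  have hST : S = ↑T := by
    ext y
    simp only [hS, hT, Set.mem_setOf_eq, Finset.coe_image, Set.mem_image,
      Finset.mem_coe, Finset.mem_range]
    constructor
    · rintro ⟨m, rfl⟩
      obtain ⟨r, hr, hr2⟩ := hrep m
      exact ⟨r, hr, hr2.symm⟩
    · rintro ⟨r, _, rfl⟩
      exact ⟨r, rfl⟩
  have hTcard : T.card = d := by
    rw [hT, Finset.card_image_of_injOn, Finset.card_range]
    intro i hi j hj heq
    simp only [Finset.coe_range, Set.mem_Iio] at hi hj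
    rcases le_total i j with hle | hle
    · exact hinj i j hi hj hle heq
    · exact (hinj j i hj hi hle heq.symm).symm
  have : Nat.card {y : α // ∃ m : ℕ, F^[m] x = y} = S.ncard := Nat.card_coe_set_eq S
  rw [this, hST, Set.ncard_coe_finset, hTcard]

theorem stmt_7 (n k j : ℕ) (hn : 1 ≤ n) (hk : 2 ≤ k) (hj : 1 ≤ j)
    (hnj : n + j ≤ k * n) (f : Fin (k * n) → ℤ) (hf : IsPathPJ n k j f)
    (s : ℕ) (hs : s = Nat.card {g : Fin (k * n) → ℤ // ∃ m : ℕ, (rotL k)^[m] f = g}) :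
    s ∣ n ∧ (n / s) ∣ j := by
  have hN : 0 < k * n := by positivity
  -- iterate formula
  have hiter : ∀ m (t : Fin (k * n)),
      ((rotL k)^[m] f) t = f ⟨((t : ℕ) + k * m) % (k * n), Nat.mod_lt _ hN⟩ := by
    intro m
    induction m with
    | zero =>
      intro t
      simp only [Function.iterate_zero, id_eq, Nat.mul_zero, Nat.add_zero]
      congr 1
      exact Fin.ext (Nat.mod_eq_of_lt t.isLt).symm
    | succ m ih =>
      intro t
      rw [Function.iterate_succ_apply']
      show ((rotL k)^[m] f) ⟨((t : ℕ) + k) % (k * n), _⟩ = _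
      rw [ih]
      congr 1
      apply Fin.ext
      show (((t : ℕ) + k) % (k * n) + k * m) % (k * n) = ((t : ℕ) + k * (m + 1)) % (k * n)
      rw [Nat.mod_add_mod]
      congr 1
      ring
  have hfixn : (rotL k)^[n] f = f := by
    funext t
    rw [hiter]
    congr 1
    apply Fin.ext
    show ((t : ℕ) + k * n) % (k * n) = (t : ℕ)
    rw [Nat.add_mod_right, Nat.mod_eq_of_lt t.isLt]
  obtain ⟨d, hdpos, hdn, hdfix, hcard⟩ := orbit_aux (rotL k) f n hn hfixn
  have hsd : s = d := by rw [hs, hcard]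
  subst hsd
  refine ⟨hdn, ?_⟩
  -- counting
  set q := n / s with hq
  set p := k * s with hp
  have hqp : q * p = k * n := by
    rw [hq, hp]
    rw [show n / s * (k * s) = k * (n / s * s) by ring, Nat.div_mul_cancel hdn]
  classical
  set g : ℕ → ℕ := fun u => if f ⟨u % (k * n), Nat.mod_lt _ hN⟩ = 1 then 1 else 0 with hg
  have hper : ∀ u, g (u + p) = g u := by
    intro u
    have h1 : ∀ t : Fin (k * n), f ⟨((t : ℕ) + k * s) % (k * n), Nat.mod_lt _ hN⟩ = f t := by
      intro t
      rw [← hiter s t, hdfix]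
    have h2 := h1 ⟨u % (k * n), Nat.mod_lt _ hN⟩
    have hidx : (u + p) % (k * n) = (u % (k * n) + k * s) % (k * n) := by
      rw [Nat.mod_add_mod, hp]
    have h3 : f ⟨(u + p) % (k * n), Nat.mod_lt _ hN⟩ = f ⟨u % (k * n), Nat.mod_lt _ hN⟩ := by
      rw [← h2]
      exact congrArg f (Fin.ext hidx)
    simp only [hg, h3]
  have hperq : ∀ a u, g (u + a * p) = g u := by
    intro a
    induction a with
    | zero => intro u; simp
    | succ a ih =>
      intro u
      rw [Nat.succ_mul, ← Nat.add_assoc, hper, ih]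
  have hsum : ∀ a : ℕ, ∑ u ∈ Finset.range (a * p), g u = a * ∑ u ∈ Finset.range p, g u := by
    intro a
    induction a with
    | zero => simp
    | succ a ih =>
      have hsplit : ∑ u ∈ Finset.range (a * p + p), g u =
          ∑ u ∈ Finset.range (a * p), g u + ∑ u ∈ Finset.Ico (a * p) (a * p + p), g u := by
        rw [Finset.range_eq_Ico, Finset.range_eq_Ico]
        exact (Finset.sum_Ico_consecutive g (Nat.zero_le _) (Nat.le_add_right _ _)).symm
      have hico : ∑ u ∈ Finset.Ico (a * p) (a * p + p), g u = ∑ u ∈ Finset.range p, g u := by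
        rw [Finset.sum_Ico_eq_sum_range]
        simp only [Nat.add_sub_cancel_left]
        refine Finset.sum_congr rfl fun i _ => ?_
        rw [Nat.add_comm (a * p) i, hperq]
      rw [Nat.succ_mul, hsplit, hico, ih]
      ring
  have hcardsum : n + j = ∑ u ∈ Finset.range (k * n), g u := by
    rw [← hf.2, Finset.card_filter]
    rw [← Fin.sum_univ_eq_sum_range g (k * n)]
    refine Finset.sum_congr rfl fun t _ => ?_
    simp only [hg]
    congr 2
    · exact congrArg f (Fin.ext (Nat.mod_eq_of_lt t.isLt).symm)
  have hdvdnj : q ∣ n + j := by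
    rw [hcardsum, ← hqp, hsum]
    exact Dvd.intro _ rfl
  have hqn : q ∣ n := ⟨s, (Nat.div_mul_cancel hdn).symm⟩
  have := Nat.dvd_sub hdvdnj hqn
  simpa using this
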